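/- Logarithmic decay from modewise exponential decay by interpolation: let C > 0 and 𝔭 > 0 be real constants, and for each pair of integers (m, ℓ) with ℓ ≥ 2 and |m| ≤ ℓ let e_{mℓ} : ℝ → [0, ∞) be continuous, with Σ_{ℓ≥2} Σ_{|m|≤ℓ} ℓ^2 e_{mℓ}(t) < ∞ for every t, and suppose that for every such (m, ℓ): e_{mℓ}(t2) ≤ C e_{mℓ}(t1) for all t1 ≤ t2, and e_{mℓ}(t2) + ∫_{t1}^{t2} e_{mℓ}(t) dt ≤ e^{C ℓ^𝔭} e_{mℓ}(t1) for all t1 ≤ t2. Then there exists a constant C′ > 0 depending only on C and 𝔭 such that for every t0 and every t with t − t0 > 1, Σ_{ℓ≥2} Σ_{|m|≤ℓ} e_{mℓ}(t) ≤ C′ ( log(t − t0) )^{−2/𝔭} Σ_{ℓ≥2} Σ_{|m|≤ℓ} ℓ^2 e_{mℓ}(t0). -/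

import Mathlib

noncomputable section

open MeasureTheory Filter Set

/-- Index set of angular modes: pairs (m, ℓ) with ℓ ≥ 2 and |m| ≤ ℓ. -/
def ModeIdx : Type := {q : ℤ × ℕ // 2 ≤ q.2 ∧ |q.1| ≤ (q.2 : ℤ)}

open Real in

lemma scalar_bound (C p : ℝ) (hC : 0 < C) (hp : 0 < p)
    (x : ℝ) (hx : 1 < x) (ℓ : ℕ) (hℓ : 2 ≤ ℓ) (a b : ℝ) (ha : 0 ≤ a)
    (h1 : b ≤ C * a) (h2 : b ≤ C * Real.exp (C * (ℓ : ℝ) ^ p) * a / x) :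
    b ≤ C * ((2 * C) ^ (2 / p) + (4 / p) ^ (2 / p)) * Real.log x ^ (-(2 / p))
        * ((ℓ : ℝ) ^ 2 * a) := by
  have hx0 : (0:ℝ) < x := lt_trans one_pos hx
  set L := Real.log x with hLdef
  have hL : 0 < L := Real.log_pos hx
  have hq : 0 < 2 / p := by positivity
  have hLq : 0 < L ^ (2 / p) := Real.rpow_pos_of_pos hL _
  have hLnq : L ^ (-(2 / p)) = (L ^ (2 / p))⁻¹ := Real.rpow_neg hL.le _
  have hl0 : (0:ℝ) < (ℓ : ℝ) := by positivity
  have hl2 : (2:ℝ) ≤ (ℓ : ℝ) := by exact_mod_cast hℓ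
  have hl2sq : (1:ℝ) ≤ (ℓ : ℝ) ^ 2 := by nlinarith
  have hlsq : ((ℓ : ℝ) ^ p) ^ (2 / p) = (ℓ : ℝ) ^ 2 := by
    rw [← Real.rpow_natCast (ℓ : ℝ) 2, ← Real.rpow_mul hl0.le]
    congr 1
    push_cast
    field_simp
  have h2C : (0:ℝ) < (2 * C) ^ (2 / p) := by positivity
  have h4p : (0:ℝ) < (4 / p) ^ (2 / p) := by positivity
  rw [hLnq]
  by_cases hcase : C * (ℓ : ℝ) ^ p ≤ L / 2
  · -- low mode: use h2
    have hexp : Real.exp (C * (ℓ : ℝ) ^ p) ≤ x ^ ((1:ℝ)/2) := by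
      rw [Real.rpow_def_of_pos hx0]
      exact Real.exp_le_exp.2 (by rw [← hLdef]; linarith)
    have hxhalf : 0 < x ^ ((1:ℝ)/2) := Real.rpow_pos_of_pos hx0 _
    have hlog : L ≤ (4 / p) * x ^ (p / 4) := by
      have h := Real.log_le_rpow_div hx0.le (show (0:ℝ) < p / 4 by positivity)
      rw [← hLdef] at h
      calc L ≤ x ^ (p/4) / (p/4) := h
        _ = (4/p) * x ^ (p/4) := by field_simp
    have hkey : L ^ (2/p) ≤ (4/p) ^ (2/p) * x ^ ((1:ℝ)/2) := by
      have hhalf : p / 4 * (2 / p) = 1 / 2 := by field_simp; ring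
      calc L ^ (2/p) ≤ ((4/p) * x ^ (p/4)) ^ (2/p) :=
            Real.rpow_le_rpow hL.le hlog hq.le
        _ = (4/p) ^ (2/p) * (x ^ (p/4)) ^ (2/p) := by
            rw [Real.mul_rpow (by positivity) (by positivity)]
        _ = (4/p) ^ (2/p) * x ^ ((1:ℝ)/2) := by
            rw [← Real.rpow_mul hx0.le, hhalf]
    have hxx : x ^ ((1:ℝ)/2) * x ^ ((1:ℝ)/2) = x := by
      rw [← Real.rpow_add hx0]; norm_num
    have h3 : b ≤ C * a * (x ^ ((1:ℝ)/2))⁻¹ := by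
      calc b ≤ C * Real.exp (C * (ℓ : ℝ) ^ p) * a / x := h2
        _ ≤ C * x ^ ((1:ℝ)/2) * a / x := by gcongr
        _ = C * a * (x ^ ((1:ℝ)/2) / x) := by ring
        _ = C * a * (x ^ ((1:ℝ)/2))⁻¹ := by
            congr 1
            rw [div_eq_iff hx0.ne']
            calc x ^ ((1:ℝ)/2)
                = (x ^ ((1:ℝ)/2))⁻¹ * (x ^ ((1:ℝ)/2) * x ^ ((1:ℝ)/2)) := by
                  rw [inv_mul_cancel_left₀ hxhalf.ne']
              _ = (x ^ ((1:ℝ)/2))⁻¹ * x := by rw [hxx]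
    have hone : (1:ℝ) ≤ (4/p) ^ (2/p) * (L ^ (2/p))⁻¹ * x ^ ((1:ℝ)/2) := by
      have h := (one_le_div hLq).2 hkey
      calc (1:ℝ) ≤ (4/p) ^ (2/p) * x ^ ((1:ℝ)/2) / L ^ (2/p) := h
        _ = (4/p) ^ (2/p) * (L ^ (2/p))⁻¹ * x ^ ((1:ℝ)/2) := by ring
    -- from hone : (x^(1/2))⁻¹ ≤ (4/p)^(2/p) * (L^(2/p))⁻¹
    have hinvle : (x ^ ((1:ℝ)/2))⁻¹ ≤ (4/p) ^ (2/p) * (L ^ (2/p))⁻¹ := by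
      rw [← mul_le_mul_iff_of_pos_right hxhalf, inv_mul_cancel₀ hxhalf.ne']
      exact hone
    calc b ≤ C * a * (x ^ ((1:ℝ)/2))⁻¹ := h3
      _ = C * (x ^ ((1:ℝ)/2))⁻¹ * a := by ring
      _ ≤ C * ((4/p) ^ (2/p) * (L ^ (2/p))⁻¹) * a := by
          gcongr
      _ ≤ C * ((2*C) ^ (2/p) + (4/p) ^ (2/p)) * (L ^ (2/p))⁻¹ * ((ℓ:ℝ)^2 * a) := by
          nlinarith [mul_nonneg (mul_nonneg (mul_nonneg hC.le h2C.le)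
              (inv_pos.2 hLq).le) (mul_nonneg (by positivity : (0:ℝ) ≤ (ℓ:ℝ)^2) ha),
            mul_le_mul_of_nonneg_left (mul_le_mul_of_nonneg_right hl2sq ha)
              (by positivity : (0:ℝ) ≤ C * ((4/p) ^ (2/p) * (L ^ (2/p))⁻¹))]
  · -- high mode: use h1
    push_neg at hcase
    have hkeyA : L ^ (2/p) ≤ (2*C) ^ (2/p) * (ℓ:ℝ)^2 := by
      have hdiv : L / (2*C) ≤ (ℓ:ℝ) ^ p := by
        rw [div_le_iff₀ (by positivity)]
        nlinarith
      calc L ^ (2/p) = (L / (2*C)) ^ (2/p) * (2*C) ^ (2/p) := by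
            rw [Real.div_rpow hL.le (by positivity : (0:ℝ) ≤ 2*C)]
            field_simp
        _ ≤ ((ℓ:ℝ)^p) ^ (2/p) * (2*C) ^ (2/p) := by
            gcongr
        _ = (2*C) ^ (2/p) * (ℓ:ℝ)^2 := by rw [hlsq]; ring
    have hone : (1:ℝ) ≤ (2*C) ^ (2/p) * (L ^ (2/p))⁻¹ * (ℓ:ℝ)^2 := by
      have h := (one_le_div hLq).2 hkeyA
      calc (1:ℝ) ≤ (2*C) ^ (2/p) * (ℓ:ℝ)^2 / L ^ (2/p) := h
        _ = (2*C) ^ (2/p) * (L ^ (2/p))⁻¹ * (ℓ:ℝ)^2 := by ring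
    calc b ≤ C * a := h1
      _ ≤ C * ((2*C) ^ (2/p) + (4/p) ^ (2/p)) * (L ^ (2/p))⁻¹ * ((ℓ:ℝ)^2 * a) := by
          nlinarith [mul_le_mul_of_nonneg_left hone (mul_nonneg hC.le ha),
            mul_nonneg (mul_nonneg (mul_nonneg hC.le h4p.le)
              (inv_pos.2 hLq).le) (mul_nonneg (by positivity : (0:ℝ) ≤ (ℓ:ℝ)^2) ha)]

/-- Logarithmic decay from modewise exponential decay by interpolation:
if each mode energy e_{mℓ} satisfies the boundedness estimate
e_{mℓ}(t₂) ≤ C e_{mℓ}(t₁) and the Carleman-type estimate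
e_{mℓ}(t₂) + ∫_{t₁}^{t₂} e_{mℓ} ≤ e^{Cℓ^𝔭} e_{mℓ}(t₁), and if
Σ ℓ² e_{mℓ}(t) < ∞ for every t, then there is C′ = C′(C, 𝔭) with
Σ e_{mℓ}(t) ≤ C′ (log(t − t₀))^{−2/𝔭} Σ ℓ² e_{mℓ}(t₀) whenever t − t₀ > 1. -/
theorem logarithmic_decay_from_modewise_decay
    (C p : ℝ) (hC : 0 < C) (hp : 0 < p) :
    ∃ C' : ℝ, 0 < C' ∧
      ∀ e : ℤ → ℕ → ℝ → ℝ,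
        (∀ m ℓ, Continuous (e m ℓ)) →
        (∀ m ℓ t, 0 ≤ e m ℓ t) →
        (∀ t : ℝ, Summable (fun q : ModeIdx => (q.1.2 : ℝ) ^ 2 * e q.1.1 q.1.2 t)) →
        (∀ m : ℤ, ∀ ℓ : ℕ, 2 ≤ ℓ → |m| ≤ (ℓ : ℤ) →
          ∀ t1 t2 : ℝ, t1 ≤ t2 → e m ℓ t2 ≤ C * e m ℓ t1) →
        (∀ m : ℤ, ∀ ℓ : ℕ, 2 ≤ ℓ → |m| ≤ (ℓ : ℤ) →
          ∀ t1 t2 : ℝ, t1 ≤ t2 →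
            e m ℓ t2 + ∫ t in t1..t2, e m ℓ t
              ≤ Real.exp (C * (ℓ : ℝ) ^ p) * e m ℓ t1) →
        ∀ t0 t : ℝ, 1 < t - t0 →
          (∑' q : ModeIdx, e q.1.1 q.1.2 t)
            ≤ C' * Real.log (t - t0) ^ (-(2 / p))
              * ∑' q : ModeIdx, (q.1.2 : ℝ) ^ 2 * e q.1.1 q.1.2 t0 := by
  refine ⟨C * ((2 * C) ^ ((2:ℝ) / p) + (4 / p) ^ ((2:ℝ) / p)), by positivity, ?_⟩
  intro e hcont hpos hsum hbdd hcar t0 t hx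
  have ht0t : t0 ≤ t := by linarith
  have hxpos : (0:ℝ) < t - t0 := by linarith
  set c : ℝ := C * ((2 * C) ^ ((2:ℝ) / p) + (4 / p) ^ ((2:ℝ) / p))
      * Real.log (t - t0) ^ (-(2 / p)) with hcdef
  have hc0 : 0 ≤ c := by
    have hL : 0 < Real.log (t - t0) := Real.log_pos hx
    positivity
  have hmode : ∀ q : ModeIdx,
      e q.1.1 q.1.2 t ≤ c * ((q.1.2 : ℝ) ^ 2 * e q.1.1 q.1.2 t0) := by
    rintro ⟨⟨m, ℓ⟩, hℓ, hm⟩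
    show e m ℓ t ≤ c * ((ℓ : ℝ) ^ 2 * e m ℓ t0)
    rw [hcdef, mul_assoc] -- nope, shape already fine? keep
    rw [← mul_assoc]
    apply scalar_bound C p hC hp (t - t0) hx ℓ hℓ _ _ (hpos m ℓ t0)
    · exact hbdd m ℓ hℓ hm t0 t ht0t
    · -- Carleman + averaging
      have hint : ∫ s in t0..t, e m ℓ s ≤ Real.exp (C * (ℓ:ℝ) ^ p) * e m ℓ t0 := by
        have h := hcar m ℓ hℓ hm t0 t ht0t
        linarith [hpos m ℓ t]
      have hintg : IntervalIntegrable (e m ℓ) volume t0 t :=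
        (hcont m ℓ).intervalIntegrable t0 t
      have hlow : (t - t0) * (e m ℓ t / C) ≤ ∫ s in t0..t, e m ℓ s := by
        have hconst : ∫ _ in t0..t, (e m ℓ t / C) = (t - t0) * (e m ℓ t / C) := by
          rw [intervalIntegral.integral_const, smul_eq_mul]
        rw [← hconst]
        apply intervalIntegral.integral_mono_on ht0t intervalIntegrable_const hintg
        intro s hs
        have h := hbdd m ℓ hℓ hm s t hs.2
        rw [div_le_iff₀ hC]
        linarith
      have hcomb := hlow.trans hint
      rw [le_div_iff₀ hxpos]
      calc e m ℓ t * (t - t0) = (t - t0) * (e m ℓ t / C) * C := by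
            field_simp
        _ ≤ Real.exp (C * (ℓ:ℝ) ^ p) * e m ℓ t0 * C :=
            mul_le_mul_of_nonneg_right hcomb hC.le
        _ = C * Real.exp (C * (ℓ:ℝ) ^ p) * e m ℓ t0 := by ring
  have hsummul : Summable (fun q : ModeIdx =>
      c * ((q.1.2 : ℝ) ^ 2 * e q.1.1 q.1.2 t0)) := (hsum t0).mul_left c
  have hsumL : Summable (fun q : ModeIdx => e q.1.1 q.1.2 t) :=
    Summable.of_nonneg_of_le (fun q => hpos _ _ t) hmode hsummul
  calc (∑' q : ModeIdx, e q.1.1 q.1.2 t)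
      ≤ ∑' q : ModeIdx, c * ((q.1.2 : ℝ) ^ 2 * e q.1.1 q.1.2 t0) :=
        Summable.tsum_le_tsum hmode hsumL hsummul
    _ = c * ∑' q : ModeIdx, (q.1.2 : ℝ) ^ 2 * e q.1.1 q.1.2 t0 := tsum_mul_left
    _ = C * ((2 * C) ^ ((2:ℝ) / p) + (4 / p) ^ ((2:ℝ) / p))
          * Real.log (t - t0) ^ (-(2 / p))
          * ∑' q : ModeIdx, (q.1.2 : ℝ) ^ 2 * e q.1.1 q.1.2 t0 := by rw [hcdef]
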